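/- arXiv:1511.01961 — 2 statements merged into one kernel-verified Lean document; each statement's English description precedes it below -/
import Mathlib

section
/- Let 1 ≤ k ≤ m with k = m or k odd, and let a ∈ B^{n-k,k} be a cup diagram. Then S_a (with the subspace topology from (S²)^m) is homeomorphic to (S²)^{⌊k/2⌋}, the ⌊k/2⌋-fold product of the two-sphere; explicitly, the map sending (x_1,…,x_m) ∈ S_a to the tuple of coordinates x_i indexed by the left endpoints i of the cups of a is a homeomorphism onto (S²)^{⌊k/2⌋}. -/
noncomputable section
namespace Spr

/-! ### Linear algebra setup -/

abbrev Vsp (N : ℕ) := EuclideanSpace ℂ (Fin (2*N))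
abbrev C2 := EuclideanSpace ℂ (Fin 2)

/-- The basis vector `e_i` (1-based index). -/
def eVec (N i : ℕ) : Vsp N :=
  if h : 1 ≤ i ∧ i ≤ N then EuclideanSpace.single (⟨i-1, by omega⟩ : Fin (2*N)) 1 else 0

/-- The basis vector `f_i` (1-based index). -/
def fVec (N i : ℕ) : Vsp N :=
  if h : 1 ≤ i ∧ i ≤ N then EuclideanSpace.single (⟨N+i-1, by omega⟩ : Fin (2*N)) 1 else 0

/-- The standard basis vector `e` of `ℂ²`. -/
def eStd : C2 := EuclideanSpace.single 0 1
/-- The standard basis vector `f` of `ℂ²`. -/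
def fStd : C2 := EuclideanSpace.single 1 1

/-- The nilpotent endomorphism `z` with two equal Jordan blocks:
`z e_1 = 0 = z f_1`, `z e_{i+1} = e_i`, `z f_{i+1} = f_i`. -/
def zMap (N : ℕ) : Vsp N →ₗ[ℂ] Vsp N where
  toFun v := WithLp.toLp 2 (fun j => if h : j.val + 1 < 2*N ∧ j.val + 1 ≠ N then v ⟨j.val+1, h.1⟩ else 0)
  map_add' v w := by
    ext j
    by_cases h : j.val + 1 < 2*N ∧ j.val + 1 ≠ N <;> simp [h, PiLp.add_apply]
  map_smul' c v := by
    ext j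
    by_cases h : j.val + 1 < 2*N ∧ j.val + 1 ≠ N <;> simp [h, PiLp.smul_apply]

def cIdx (N : ℕ) (j : Fin 2) (i : Fin N) : Fin (2*N) :=
  ⟨if j.val = 0 then i.val else N + i.val, by have := i.isLt; split <;> omega⟩

/-- The linear map `C : ℂ^{2N} → ℂ²`, `e_i ↦ e`, `f_i ↦ f`. -/
def Cmap (N : ℕ) : Vsp N →ₗ[ℂ] C2 where
  toFun v := WithLp.toLp 2 (fun j => ∑ i : Fin N, v (cIdx N j i))
  map_add' v w := by
    ext j
    simp [PiLp.add_apply, Finset.sum_add_distrib]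
  map_smul' c v := by
    ext j
    simp [PiLp.smul_apply, Finset.mul_sum]

/-- The subspace `E_{a,b} = span(e_1,…,e_a,f_1,…,f_b)`. -/
def Esub (N a b : ℕ) : Submodule ℂ (Vsp N) :=
  Submodule.span ℂ ((eVec N '' Set.Icc 1 a) ∪ (fVec N '' Set.Icc 1 b))

/-- Gram coefficients of the symmetric bilinear form `β_D^{2m-k,k}`. -/
def cD (N m k : ℕ) (p q : Fin (2*N)) : ℂ :=
  if k = m then
    (if p.val < N ∧ N ≤ q.val then
      (if (p.val + 1) + (q.val - N + 1) = k + 1 then (-1:ℂ)^(q.val - N) else 0)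
    else if N ≤ p.val ∧ q.val < N then
      (if (p.val - N + 1) + (q.val + 1) = k + 1 then (-1:ℂ)^(p.val - N) else 0)
    else 0)
  else
    (if p.val < N ∧ q.val < N then
      (if (p.val + 1) + (q.val + 1) = 2*m - k + 1 then (-1:ℂ)^(p.val) else 0)
    else if N ≤ p.val ∧ N ≤ q.val then
      (if (p.val - N + 1) + (q.val - N + 1) = k + 1 then (-1:ℂ)^(p.val - N + 1) else 0)
    else 0)

/-- Gram coefficients of the symplectic bilinear form `β_C^{2m-k-1,k-1}`. -/
def cC (N m k : ℕ) (p q : Fin (2*N)) : ℂ :=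
  if k = m then
    (if N ≤ p.val ∧ q.val < N then
      (if (p.val - N + 1) + (q.val + 1) = k then (-1:ℂ)^(p.val - N) else 0)
    else if p.val < N ∧ N ≤ q.val then
      (if (p.val + 1) + (q.val - N + 1) = k then -(-1:ℂ)^(q.val - N) else 0)
    else 0)
  else
    (if p.val < N ∧ q.val < N then
      (if (p.val + 1) + (q.val + 1) = 2*m - k ∧ p.val < q.val then (-1:ℂ)^(p.val + 1)
       else if (p.val + 1) + (q.val + 1) = 2*m - k ∧ q.val < p.val then (-1:ℂ)^(p.val)
       else 0)
    else if N ≤ p.val ∧ N ≤ q.val then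
      (if (p.val - N + 1) + (q.val - N + 1) = k ∧ p.val < q.val then (-1:ℂ)^(p.val - N)
       else if (p.val - N + 1) + (q.val - N + 1) = k ∧ q.val < p.val then (-1:ℂ)^(p.val - N + 1)
       else 0)
    else 0)

/-- The bilinear pairing associated to a matrix `c` of coefficients. -/
def bFormFun (N : ℕ) (c : Fin (2*N) → Fin (2*N) → ℂ) (v w : Vsp N) : ℂ :=
  ∑ p : Fin (2*N), ∑ q : Fin (2*N), v p * (c p q * w q)

/-- The symmetric bilinear form `β_D^{2m-k,k}` (extended by zero to all of `ℂ^{2N}`). -/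
def betaD (N m k : ℕ) : Vsp N → Vsp N → ℂ := bFormFun N (cD N m k)

/-- The symplectic bilinear form `β_C^{2m-k-1,k-1}` (extended by zero to all of `ℂ^{2N}`). -/
def betaC (N m k : ℕ) : Vsp N → Vsp N → ℂ := bFormFun N (cC N m k)

/-- A subspace is isotropic with respect to a bilinear form. -/
def IsIsotropic {N : ℕ} (B : Vsp N → Vsp N → ℂ) (W : Submodule ℂ (Vsp N)) : Prop :=
  ∀ v ∈ W, ∀ w ∈ W, B v w = 0

lemma bFormFun_add_left {N : ℕ} (c : Fin (2*N) → Fin (2*N) → ℂ) (v v' w : Vsp N) :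
    bFormFun N c (v + v') w = bFormFun N c v w + bFormFun N c v' w := by
  simp [bFormFun, PiLp.add_apply, add_mul, Finset.sum_add_distrib]

lemma bFormFun_smul_left {N : ℕ} (c : Fin (2*N) → Fin (2*N) → ℂ) (s : ℂ) (v w : Vsp N) :
    bFormFun N c (s • v) w = s * bFormFun N c v w := by
  simp [bFormFun, PiLp.smul_apply, smul_eq_mul, mul_assoc, Finset.mul_sum]

lemma bFormFun_zero_left {N : ℕ} (c : Fin (2*N) → Fin (2*N) → ℂ) (w : Vsp N) :
    bFormFun N c 0 w = 0 := by
  simp [bFormFun]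

/-- `{v ∈ E | ∀ w ∈ F, B(v,w) = 0}` for the bilinear form with coefficients `c`. -/
def perpB (N : ℕ) (c : Fin (2*N) → Fin (2*N) → ℂ) (E F : Submodule ℂ (Vsp N)) :
    Submodule ℂ (Vsp N) where
  carrier := {v | v ∈ E ∧ ∀ w ∈ F, bFormFun N c v w = 0}
  add_mem' := by
    rintro x y ⟨hxE, hx⟩ ⟨hyE, hy⟩
    exact ⟨E.add_mem hxE hyE, fun w hw => by
      rw [bFormFun_add_left, hx w hw, hy w hw, add_zero]⟩
  zero_mem' := ⟨E.zero_mem, fun w hw => bFormFun_zero_left c w⟩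
  smul_mem' := by
    rintro s x ⟨hxE, hx⟩
    exact ⟨E.smul_mem s hxE, fun w hw => by
      rw [bFormFun_smul_left, hx w hw, mul_zero]⟩

/-- `F^{⊥_D}`, the orthogonal of `F` inside `E_{2m-k,k}` with respect to `β_D`. -/
def perpD (N m k : ℕ) (F : Submodule ℂ (Vsp N)) : Submodule ℂ (Vsp N) :=
  perpB N (cD N m k) (Esub N (2*m-k) k) F

/-- `F^{⊥_C}`, the orthogonal of `F` inside `E_{2m-k-1,k-1}` with respect to `β_C`. -/
def perpC (N m k : ℕ) (F : Submodule ℂ (Vsp N)) : Submodule ℂ (Vsp N) :=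
  perpB N (cC N m k) (Esub N (2*m-k-1) (k-1)) F

/-- Membership in the Cautis–Kamnitzer variety `Y`: a flag `F_0 ⊆ F_1 ⊆ … ⊆ F_{len-1}` with
`F_0 = 0`, `dim F_i = i`, and `z F_i ⊆ F_{i-1}`. -/
def InY (N len : ℕ) (F : Fin len → Submodule ℂ (Vsp N)) : Prop :=
  (∀ i : Fin len, i.val = 0 → F i = ⊥) ∧
  ∀ i j : Fin len, j.val = i.val + 1 →
    Module.finrank ℂ ↥(F j) = j.val ∧ F i ≤ F j ∧
      Submodule.map (zMap N) (F j) ≤ F i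

/-- Membership in the embedded type `D` Springer fiber `Fl^{2m-k,k}_D ⊆ Y_m`. -/
def InFlD (N m k : ℕ) (F : Fin (m+1) → Submodule ℂ (Vsp N)) : Prop :=
  InY N (m+1) F ∧ F (Fin.last m) ≤ Esub N (2*m-k) k ∧
    IsIsotropic (betaD N m k) (F (Fin.last m))

/-- Membership in the embedded type `C` Springer fiber `Fl^{2m-k-1,k-1}_C ⊆ Y_{m-1}`;
here `G : Fin m → _` is the flag `(G_0,…,G_{m-1})`. -/
def InFlC (N m k : ℕ) (G : Fin m → Submodule ℂ (Vsp N)) : Prop :=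
  InY N m G ∧ ∀ i : Fin m, i.val = m - 1 →
    G i ≤ Esub N (2*m-k-1) (k-1) ∧ IsIsotropic (betaC N m k) (G i)

/-! ### Cup diagrams -/

/-- A (dotted) cup diagram on the vertices `{1,…,m}`. -/
structure CupDiagram (m : ℕ) where
  cups : Finset (ℕ × ℕ)
  dottedCups : Finset (ℕ × ℕ)
  dottedRays : Finset ℕ
  cups_valid : ∀ p ∈ cups, 1 ≤ p.1 ∧ p.1 < p.2 ∧ p.2 ≤ m
  cups_disjoint : ∀ p ∈ cups, ∀ q ∈ cups, p ≠ q →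
    p.1 ≠ q.1 ∧ p.1 ≠ q.2 ∧ p.2 ≠ q.1 ∧ p.2 ≠ q.2
  noncrossing : ∀ p ∈ cups, ∀ l, p.1 < l → l < p.2 →
    ∃ q ∈ cups, (l = q.1 ∨ l = q.2) ∧ p.1 < q.1 ∧ q.2 < p.2
  dottedCups_sub : dottedCups ⊆ cups
  dottedRays_valid : ∀ r ∈ dottedRays, 1 ≤ r ∧ r ≤ m ∧ ∀ p ∈ cups, r ≠ p.1 ∧ r ≠ p.2
  dottedCups_cond : ∀ p ∈ dottedCups,
    (∀ q ∈ cups, ¬(q.1 < p.1 ∧ p.2 < q.2)) ∧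
    (∀ r, p.2 < r → r ≤ m → ∃ q ∈ cups, r = q.1 ∨ r = q.2)
  dottedRays_cond : ∀ r ∈ dottedRays, ∀ r', r < r' → r' ≤ m →
    ∃ q ∈ cups, r' = q.1 ∨ r' = q.2

/-- The vertex `v` carries a ray of the cup diagram `a`. -/
def CupDiagram.HasRay {m : ℕ} (a : CupDiagram m) (v : ℕ) : Prop :=
  1 ≤ v ∧ v ≤ m ∧ ∀ p ∈ a.cups, v ≠ p.1 ∧ v ≠ p.2

/-- The total number of dots of a cup diagram. -/
def CupDiagram.dots {m : ℕ} (a : CupDiagram m) : ℕ :=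
  a.dottedCups.card + a.dottedRays.card

/-! ### The sets `T_a ⊆ (ℙ¹)^m` -/

/-- The subset `T_a ⊆ (ℙ¹)^m` attached to a cup diagram `a ∈ B^{2m-k,k}`
(tuples are `0`-indexed: the coordinate `l i` corresponds to the vertex `i+1`). -/
def Ta (m k : ℕ) (a : CupDiagram m) : Set (Fin m → Submodule ℂ C2) :=
  {l | (∀ i : Fin m, Module.finrank ℂ ↥(l i) = 1) ∧
       (∀ i j : Fin m, (i.val+1, j.val+1) ∈ a.cups → (i.val+1, j.val+1) ∉ a.dottedCups →
          l j = (l i)ᗮ) ∧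
       (∀ i j : Fin m, (i.val+1, j.val+1) ∈ a.dottedCups → l i = l j) ∧
       (if k = m then
          ∀ i : Fin m, a.HasRay (i.val+1) →
            (i.val+1 ∉ a.dottedRays → l i = Submodule.span ℂ {fStd}) ∧
            (i.val+1 ∈ a.dottedRays → l i = Submodule.span ℂ {eStd})
        else
          ∀ i : Fin m, a.HasRay (i.val+1) →
            ((∃ r, a.HasRay r ∧ i.val+1 < r) → l i = Submodule.span ℂ {eStd}) ∧
            ((∀ r, a.HasRay r → r ≤ i.val+1) →
              l i = Submodule.span ℂ
                {(if (m-k) % 2 = 0 then (1:ℂ) else Complex.I) • eStd +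
                 (if i.val+1 ∈ a.dottedRays then (1:ℂ) else (-1:ℂ)) • fStd}))}

/-- The compatibility `C(F_{i} ∩ F_{i-1}^⊥) = l_i` for all `1 ≤ i ≤ m`. -/
def Compat (N m : ℕ) (F : Fin (m+1) → Submodule ℂ (Vsp N))
    (l : Fin m → Submodule ℂ C2) : Prop :=
  ∀ i : Fin m, Submodule.map (Cmap N) (F i.succ ⊓ (F i.castSucc)ᗮ) = l i

/-! ### Spheres and the topological Springer fiber -/

abbrev E3 := EuclideanSpace ℝ (Fin 3)
abbrev Sph : Type := ↥(Metric.sphere (0 : E3) 1)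

/-- The point `p = (0,0,1)`. -/
def pPt : E3 := EuclideanSpace.single 2 1
/-- The point `q = (1,0,0)`. -/
def qPt : E3 := EuclideanSpace.single 0 1

/-- The submanifold `S_a ⊆ (S²)^m` attached to a cup diagram `a`
(tuples are `0`-indexed: the coordinate `x i` corresponds to the vertex `i+1`). -/
def Sa (m : ℕ) (a : CupDiagram m) : Set (Fin m → Sph) :=
  {x | (∀ i j : Fin m, (i.val+1, j.val+1) ∈ a.cups →
          ((i.val+1, j.val+1) ∉ a.dottedCups → (x i : E3) = -(x j : E3)) ∧
          ((i.val+1, j.val+1) ∈ a.dottedCups → (x i : E3) = (x j : E3))) ∧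
       (∀ i : Fin m, a.HasRay (i.val+1) →
          (i.val+1 ∈ a.dottedRays → (x i : E3) = pPt) ∧
          (i.val+1 ∉ a.dottedRays →
            ((∀ r, a.HasRay r → r ≤ i.val+1) → (x i : E3) = -pPt) ∧
            ((∃ r, a.HasRay r ∧ i.val+1 < r) → (x i : E3) = qPt)))}

/-! ### Circle diagrams -/

/-- The edge relation of the circle diagram `\bar a b`. -/
def EdgeRel (m : ℕ) (a b : CupDiagram m) (i j : ℕ) : Prop :=
  (i, j) ∈ a.cups ∨ (j, i) ∈ a.cups ∨ (i, j) ∈ b.cups ∨ (j, i) ∈ b.cups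

/-- Two vertices lie in the same connected component of the circle diagram. -/
def Reach (m : ℕ) (a b : CupDiagram m) : ℕ → ℕ → Prop :=
  Relation.ReflTransGen (EdgeRel m a b)

/-- The number of dots on the connected component of the vertex `v` in the
circle diagram `\bar a b`. -/
def compDots (m : ℕ) (a b : CupDiagram m) (v : ℕ) : ℕ :=
  {p : ℕ × ℕ | p ∈ a.dottedCups ∧ Reach m a b v p.1 ∧ Reach m a b v p.2}.ncard +
  {p : ℕ × ℕ | p ∈ b.dottedCups ∧ Reach m a b v p.1 ∧ Reach m a b v p.2}.ncard +
  {r : ℕ | r ∈ a.dottedRays ∧ Reach m a b v r}.ncard +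
  {r : ℕ | r ∈ b.dottedRays ∧ Reach m a b v r}.ncard

/-- The connected component of `v` in the circle diagram is closed, i.e. none of
its vertices carries a ray of `a` or of `b`. -/
def IsClosedCompAt (m : ℕ) (a b : CupDiagram m) (v : ℕ) : Prop :=
  ∀ w, Reach m a b v w → ¬ a.HasRay w ∧ ¬ b.HasRay w

/-- The number of closed connected components of the circle diagram `\bar a b`. -/
def numClosed (m : ℕ) (a b : CupDiagram m) : ℕ :=
  {s : Set ℕ | ∃ v, 1 ≤ v ∧ v ≤ m ∧ IsClosedCompAt m a b v ∧
      s = {w | Reach m a b v w}}.ncard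

/-! ### The diffeomorphism `γ_{n-k,k}` -/

/-- Stereographic projection `S² \ {p} → ℂ`. -/
def sigmaProj (v : E3) : ℂ :=
  Complex.ofReal (v 0 / (1 - v 2)) + Complex.I * Complex.ofReal (v 1 / (1 - v 2))

open scoped Classical in
/-- The map `γ : S² → ℙ¹` (extended to the ambient space `ℝ³`). -/
def gammaAmb (v : E3) : Submodule ℂ C2 :=
  if v = pPt then Submodule.span ℂ {eStd}
  else Submodule.span ℂ {sigmaProj v • eStd + fStd}

/-- The coordinate swap `s(x,y,z) = (x,z,y)`. -/
def sSwap (v : E3) : E3 := WithLp.toLp 2 (fun j => v (if j.val = 1 then (2 : Fin 3) else if j.val = 2 then 1 else 0))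
/-- The coordinate swap `t(x,y,z) = (z,y,x)`. -/
def tSwap (v : E3) : E3 := WithLp.toLp 2 (fun j => v (if j.val = 0 then (2 : Fin 3) else if j.val = 2 then 0 else 1))

/-- The diffeomorphism `γ_{n-k,k} : (S²)^m → (ℙ¹)^m`. -/
def gammaNK (m k : ℕ) (x : Fin m → Sph) : Fin m → Submodule ℂ C2 := fun i =>
  if k = m then gammaAmb (x i)
  else if (m - k) % 2 = 1 then gammaAmb (tSwap (x i))
  else gammaAmb (sSwap (x i))

/-! ### Jordan types and special simultaneous Jordan systems -/

/-- The nilpotent endomorphism induced by `z` on the subquotient `W/F` has Jordan type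
`(a,b)`, encoded via the dimensions of the kernels of its powers:
`dim ker((z̄)^j) = min(j,a) + min(j,b)` for all `j`. -/
def HasJordanTypeOn (N : ℕ) (W F : Submodule ℂ (Vsp N)) (a b : ℕ) : Prop :=
  ∀ j : ℕ, Module.finrank ℂ ↥(W ⊓ Submodule.comap (zMap N ^ j) F)
    = min j a + min j b + Module.finrank ℂ ↥F

/-- A special simultaneous Jordan system at level `i` for the subspace `Fi = F_i`
(Definition of Ehrig–Stroppel–Wilbert, Definition 4.4 of the paper). -/
def SpecialSJS (N m k : ℕ) (Fi : Submodule ℂ (Vsp N)) (i : ℕ) (ev fv : ℕ → Vsp N) : Prop :=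
  (∀ j, 1 ≤ j → j + 1 ≤ m - i → zMap N (ev (j+1)) = ev j ∧ zMap N (fv (j+1)) = fv j) ∧
  (zMap N (ev 1) ∈ Fi ∧ zMap N (fv 1) ∈ Fi) ∧
  (∀ j, 1 ≤ j → j ≤ m - i → ev j ∈ perpD N m k Fi ∧ fv j ∈ perpD N m k Fi) ∧
  (∀ j, 1 ≤ j → j ≤ m - i - 1 → ev j ∈ perpC N m k Fi ∧ fv j ∈ perpC N m k Fi) ∧
  LinearIndependent ℂ (fun s : Fin (m-i) ⊕ Fin (m-i) =>
    (Submodule.Quotient.mk (Sum.elim (fun t => ev (t.val+1)) (fun t => fv (t.val+1)) s) :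
      Vsp N ⧸ Fi)) ∧
  (perpD N m k Fi
     = Fi ⊔ Submodule.span ℂ ((ev '' Set.Icc 1 (m-i)) ∪ (fv '' Set.Icc 1 (m-i)))) ∧
  (perpC N m k Fi
     = Fi ⊔ Submodule.span ℂ ((ev '' Set.Icc 1 (m-i-1)) ∪ (fv '' Set.Icc 1 (m-i-1)))) ∧
  (∀ j j', 1 ≤ j → j ≤ m-i → 1 ≤ j' → j' ≤ m-i →
      betaD N m k (fv j) (ev j') = (if j + j' = m - i + 1 then (-1:ℂ)^(j-1) else 0) ∧
      betaD N m k (ev j) (ev j') = 0 ∧ betaD N m k (fv j) (fv j') = 0) ∧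
  (∀ j j', 1 ≤ j → j ≤ m-i-1 → 1 ≤ j' → j' ≤ m-i-1 →
      betaC N m k (fv j) (ev j') = (if j + j' = m - i then (-1:ℂ)^(j-1) else 0) ∧
      betaC N m k (ev j') (fv j) = -(if j + j' = m - i then (-1:ℂ)^(j-1) else 0) ∧
      betaC N m k (ev j) (ev j') = 0 ∧ betaC N m k (fv j) (fv j') = 0) ∧
  (∀ j j', 1 ≤ j → j ≤ m-i → 1 ≤ j' → j' ≤ m-i →
      (inner ℂ (ev j) (ev j') : ℂ) = (if j = j' then 1 else 0) ∧
      (inner ℂ (fv j) (fv j') : ℂ) = (if j = j' then 1 else 0) ∧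
      (inner ℂ (ev j) (fv j') : ℂ) = 0) ∧
  (∀ j, 1 ≤ j → j ≤ m-i → ev j ∈ Fiᗮ ∧ fv j ∈ Fiᗮ) ∧
  (∀ j, 2 ≤ j → j ≤ m-i → Cmap N (ev j) = Cmap N (zMap N (ev j)) ∧
      Cmap N (fv j) = Cmap N (zMap N (fv j)))

/-! ### Auxiliary material for Statement 8 -/

/-- The set of left endpoints of cups (as `0`-based indices). -/
def leftSet {m : ℕ} (a : CupDiagram m) : Set (Fin m) :=
  {i : Fin m | ∃ j, (i.val + 1, j) ∈ a.cups}

/-- `p = (0,0,1)` as a point of the sphere. -/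
def pSph : Sph := ⟨pPt, by
  simp [pPt, mem_sphere_zero_iff_norm, EuclideanSpace.norm_single]⟩

/-- `q = (1,0,0)` as a point of the sphere. -/
def qSph : Sph := ⟨qPt, by
  simp [qPt, mem_sphere_zero_iff_norm, EuclideanSpace.norm_single]⟩

/-- The antipodal map on the sphere. -/
def negSph (v : Sph) : Sph := ⟨-(v : E3), by
  have := v.2
  simpa [mem_sphere_zero_iff_norm] using this⟩

lemma coe_negSph (v : Sph) : (negSph v : E3) = -(v : E3) := rfl

lemma continuous_negSph : Continuous negSph :=
  Continuous.subtype_mk (continuous_subtype_val.neg) _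

/-- The left endpoint of a cup whose right endpoint is `i+1`, as an element of `leftSet a`. -/
noncomputable def partner {m : ℕ} (a : CupDiagram m) (i : Fin m)
    (h2 : ∃ c, (c, i.val + 1) ∈ a.cups) : ↥(leftSet a) :=
  ⟨⟨Classical.choose h2 - 1, by
      have hj := Classical.choose_spec h2
      have hv1 : 1 ≤ Classical.choose h2 := (a.cups_valid _ hj).1
      have hv2 : Classical.choose h2 < i.val + 1 := (a.cups_valid _ hj).2.1
      have := i.isLt
      omega⟩,
    by
      have hj := Classical.choose_spec h2
      have hv1 : 1 ≤ Classical.choose h2 := (a.cups_valid _ hj).1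
      refine ⟨i.val + 1, ?_⟩
      show (Classical.choose h2 - 1 + 1, i.val + 1) ∈ a.cups
      rw [Nat.sub_add_cancel hv1]
      exact hj⟩

lemma choose_right {m : ℕ} (a : CupDiagram m) {i j : Fin m}
    (hc : (i.val + 1, j.val + 1) ∈ a.cups) (h2 : ∃ c, (c, j.val + 1) ∈ a.cups) :
    Classical.choose h2 = i.val + 1 := by
  by_contra hne
  have hj := Classical.choose_spec h2
  have hd := a.cups_disjoint _ hj _ hc (by
    simp only [ne_eq, Prod.mk.injEq, not_and]
    intro h _
    exact hne h)
  exact hd.2.2.2 rfl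

lemma partner_eq {m : ℕ} (a : CupDiagram m) {i j : Fin m}
    (hc : (i.val + 1, j.val + 1) ∈ a.cups) (h2 : ∃ c, (c, j.val + 1) ∈ a.cups) :
    partner a j h2 = ⟨i, ⟨j.val + 1, hc⟩⟩ := by
  have := choose_right a hc h2
  apply Subtype.ext
  apply Fin.ext
  show Classical.choose h2 - 1 = i.val
  omega

open Classical in
/-- The canonical lift of a tuple indexed by left endpoints to an element of `S_a`. -/
noncomputable def liftSa {m : ℕ} (a : CupDiagram m) (y : ↥(leftSet a) → Sph) (i : Fin m) :
    Sph :=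
  if h1 : ∃ j, (i.val + 1, j) ∈ a.cups then y ⟨i, h1⟩
  else if h2 : ∃ c, (c, i.val + 1) ∈ a.cups then
    (if (Classical.choose h2, i.val + 1) ∈ a.dottedCups then y (partner a i h2)
     else negSph (y (partner a i h2)))
  else if i.val + 1 ∈ a.dottedRays then pSph
  else if ∃ r, a.HasRay r ∧ i.val + 1 < r then qSph
  else negSph pSph

lemma liftSa_mem {m : ℕ} (a : CupDiagram m) (y : ↥(leftSet a) → Sph) :
    liftSa a y ∈ Sa m a := by
  constructor
  · intro i j hc
    have hi1 : ∃ j', (i.val + 1, j') ∈ a.cups := ⟨j.val + 1, hc⟩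
    have hlt : i.val + 1 < j.val + 1 := (a.cups_valid _ hc).2.1
    have hj1 : ¬ ∃ j', (j.val + 1, j') ∈ a.cups := by
      rintro ⟨j', hj'⟩
      have hne : (j.val + 1, j') ≠ (i.val + 1, j.val + 1) := by
        intro h
        have h1 : j.val + 1 = i.val + 1 := congrArg Prod.fst h
        omega
      exact (a.cups_disjoint _ hj' _ hc hne).2.1 rfl
    have hj2 : ∃ c, (c, j.val + 1) ∈ a.cups := ⟨i.val + 1, hc⟩
    have hch := choose_right a hc hj2
    constructor
    · intro hnd
      show (liftSa a y i : E3) = -(liftSa a y j : E3)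
      rw [liftSa, dif_pos hi1, liftSa, dif_neg hj1, dif_pos hj2,
        partner_eq a hc hj2, hch, if_neg hnd, coe_negSph, neg_neg]
    · intro hd
      show (liftSa a y i : E3) = (liftSa a y j : E3)
      rw [liftSa, dif_pos hi1, liftSa, dif_neg hj1, dif_pos hj2,
        partner_eq a hc hj2, hch, if_pos hd]
  · intro i hr
    have hi1 : ¬ ∃ j', (i.val + 1, j') ∈ a.cups := by
      rintro ⟨j', hj'⟩
      exact (hr.2.2 _ hj').1 rfl
    have hi2 : ¬ ∃ c, (c, i.val + 1) ∈ a.cups := by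
      rintro ⟨c, hc⟩
      exact (hr.2.2 _ hc).2 rfl
    constructor
    · intro hd
      show (liftSa a y i : E3) = pPt
      rw [liftSa, dif_neg hi1, dif_neg hi2, if_pos hd]
      rfl
    · intro hnd
      constructor
      · intro hmax
        have hne : ¬ ∃ r, a.HasRay r ∧ i.val + 1 < r := by
          rintro ⟨r, hr', hlt⟩
          have := hmax r hr'
          omega
        show (liftSa a y i : E3) = -pPt
        rw [liftSa, dif_neg hi1, dif_neg hi2, if_neg hnd, if_neg hne]
        rfl
      · intro hex
        show (liftSa a y i : E3) = qPt
        rw [liftSa, dif_neg hi1, dif_neg hi2, if_neg hnd, if_pos hex]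
        rfl

lemma liftSa_restrict {m : ℕ} (a : CupDiagram m) (x : Fin m → Sph) (hx : x ∈ Sa m a) :
    liftSa a (fun i : ↥(leftSet a) => x i) = x := by
  funext i
  by_cases h1 : ∃ j, (i.val + 1, j) ∈ a.cups
  · rw [liftSa, dif_pos h1]
  · by_cases h2 : ∃ c, (c, i.val + 1) ∈ a.cups
    · rw [liftSa, dif_neg h1, dif_pos h2]
      have hc := Classical.choose_spec h2
      have hv1 : 1 ≤ Classical.choose h2 := (a.cups_valid _ hc).1
      have hcc : (((partner a i h2 : ↥(leftSet a)) : Fin m).val + 1, i.val + 1) ∈ a.cups := by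
        show (Classical.choose h2 - 1 + 1, i.val + 1) ∈ a.cups
        rw [Nat.sub_add_cancel hv1]
        exact hc
      have hcup := hx.1 ((partner a i h2 : ↥(leftSet a)) : Fin m) i hcc
      have hdceq : ((Classical.choose h2, i.val + 1) ∈ a.dottedCups) ↔
          ((((partner a i h2 : ↥(leftSet a)) : Fin m).val + 1, i.val + 1) ∈ a.dottedCups) := by
        show _ ↔ ((Classical.choose h2 - 1 + 1, i.val + 1) ∈ a.dottedCups)
        rw [Nat.sub_add_cancel hv1]
      by_cases hd : (Classical.choose h2, i.val + 1) ∈ a.dottedCups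
      · rw [if_pos hd]
        exact Subtype.ext (hcup.2 (hdceq.mp hd))
      · rw [if_neg hd]
        apply Subtype.ext
        show -(x ((partner a i h2 : ↥(leftSet a)) : Fin m) : E3) = (x i : E3)
        rw [hcup.1 (fun h => hd (hdceq.mpr h)), neg_neg]
    · have hray : a.HasRay (i.val + 1) := by
        refine ⟨by omega, by have := i.isLt; omega, ?_⟩
        intro p hp
        constructor
        · intro h
          exact h1 ⟨p.2, by rw [h]; simpa using hp⟩
        · intro h
          exact h2 ⟨p.1, by rw [h]; simpa using hp⟩
      have hrc := hx.2 i hray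
      by_cases hd : i.val + 1 ∈ a.dottedRays
      · rw [liftSa, dif_neg h1, dif_neg h2, if_pos hd]
        exact Subtype.ext (hrc.1 hd).symm
      · rw [liftSa, dif_neg h1, dif_neg h2, if_neg hd]
        by_cases hex : ∃ r, a.HasRay r ∧ i.val + 1 < r
        · rw [if_pos hex]
          exact Subtype.ext ((hrc.2 hd).2 hex).symm
        · rw [if_neg hex]
          have hmax : ∀ r, a.HasRay r → r ≤ i.val + 1 := by
            intro r hr'
            by_contra h
            exact hex ⟨r, hr', by omega⟩
          apply Subtype.ext
          show (negSph pSph : E3) = (x i : E3)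
          rw [(hrc.2 hd).1 hmax]
          rfl

lemma liftSa_continuous {m : ℕ} (a : CupDiagram m) : Continuous (liftSa a) := by
  apply continuous_pi
  intro i
  by_cases h1 : ∃ j, (i.val + 1, j) ∈ a.cups
  · simp only [liftSa, dif_pos h1]
    exact continuous_apply _
  · by_cases h2 : ∃ c, (c, i.val + 1) ∈ a.cups
    · simp only [liftSa, dif_neg h1, dif_pos h2]
      by_cases hd : (Classical.choose h2, i.val + 1) ∈ a.dottedCups
      · simp only [if_pos hd]
        exact continuous_apply _
      · simp only [if_neg hd]
        exact continuous_negSph.comp (continuous_apply _)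
    · simp only [liftSa, dif_neg h1, dif_neg h2]
      exact continuous_const

/-- The homeomorphism `S_a ≃ₜ (S²)^{leftSet a}` given by projecting to left endpoints. -/
noncomputable def saHomeo {m : ℕ} (a : CupDiagram m) :
    ↥(Sa m a) ≃ₜ (↥(leftSet a) → Sph) where
  toFun x i := (x : Fin m → Sph) i
  invFun y := ⟨liftSa a y, liftSa_mem a y⟩
  left_inv x := Subtype.ext (liftSa_restrict a x x.2)
  right_inv y := by
    funext i
    show liftSa a y i = y i
    have h1 : ∃ j, ((i : Fin m).val + 1, j) ∈ a.cups := i.2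
    rw [liftSa, dif_pos h1]
  continuous_toFun := by
    apply continuous_pi
    intro i
    exact (continuous_apply ((i : Fin m))).comp continuous_subtype_val
  continuous_invFun := Continuous.subtype_mk (liftSa_continuous a) _

lemma leftSet_ncard {m : ℕ} (hm : 1 ≤ m) (a : CupDiagram m) :
    (leftSet a).ncard = a.cups.card := by
  classical
  set f : ℕ × ℕ → Fin m := fun c => if h : c.1 - 1 < m then (⟨c.1 - 1, h⟩ : Fin m)
    else ⟨0, hm⟩ with hf
  have hL : leftSet a = ↑(a.cups.image f) := by
    ext i
    simp only [leftSet, Set.mem_setOf_eq, Finset.coe_image, Set.mem_image, Finset.mem_coe]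
    constructor
    · rintro ⟨j, hj⟩
      refine ⟨(i.val + 1, j), hj, ?_⟩
      have h : (i.val + 1 : ℕ) - 1 < m := by have := i.isLt; omega
      simp only [hf, dif_pos h]
      apply Fin.ext
      simp
    · rintro ⟨⟨c1, c2⟩, hc, hfc⟩
      have hv := a.cups_valid _ hc
      have hv1 : 1 ≤ c1 := hv.1
      have h : c1 - 1 < m := by omega
      rw [hf] at hfc
      simp only [dif_pos h] at hfc
      have hiv : i.val = c1 - 1 := by rw [← hfc]
      refine ⟨c2, ?_⟩
      have he : i.val + 1 = c1 := by omega
      rw [he]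
      exact hc
  rw [hL, Set.ncard_coe_finset]
  apply Finset.card_image_of_injOn
  intro c hc c' hc' hcc
  by_contra hne
  have hv := a.cups_valid _ hc
  have hv' := a.cups_valid _ hc'
  have h : c.1 - 1 < m := by omega
  have h' : c'.1 - 1 < m := by omega
  rw [hf] at hcc
  simp only [dif_pos h, dif_pos h', Fin.mk.injEq] at hcc
  have : c.1 = c'.1 := by omega
  exact (a.cups_disjoint _ hc _ hc' hne).1 this

/-- `S_a` is homeomorphic to `(S²)^{⌊k/2⌋}`; explicitly, the map sending a
point of `S_a` to its tuple of coordinates indexed by the left endpoints of the cups of `a`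
is a homeomorphism. -/
theorem statement8 (m k : ℕ) (hm : 1 ≤ m) (hk1 : 1 ≤ k) (hk2 : k ≤ m) (hkadm : k = m ∨ Odd k)
    (a : CupDiagram m) (ha : a.cups.card = k / 2) :
    {i : Fin m | ∃ j, (i.val + 1, j) ∈ a.cups}.ncard = k / 2 ∧
    Nonempty (↥(Sa m a) ≃ₜ (Fin (k / 2) → Sph)) ∧
    ∃ h : ↥(Sa m a) ≃ₜ (↥{i : Fin m | ∃ j, (i.val + 1, j) ∈ a.cups} → Sph),
      ∀ (x : ↥(Sa m a)) (i : ↥{i : Fin m | ∃ j, (i.val + 1, j) ∈ a.cups}),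
        h x i = (x : Fin m → Sph) (i : Fin m) := by
  classical
  have hn : (leftSet a).ncard = k / 2 := by
    rw [leftSet_ncard hm a, ha]
  refine ⟨hn, ?_, ⟨saHomeo a, fun x i => ?_⟩⟩
  swap
  · show (saHomeo a).toEquiv x i = _
    rfl
  haveI : Fintype ↥(leftSet a) := Fintype.ofFinite _
  have hcard : Fintype.card ↥(leftSet a) = k / 2 := by
    rw [← Nat.card_eq_fintype_card, Nat.card_coe_set_eq, hn]
  exact ⟨(saHomeo a).trans (Homeomorph.piCongrLeft (Y := fun _ => Sph)
    (Fintype.equivFinOfCardEq hcard))⟩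

end Spr
end
end

section
/- Let m ≥ 2 and k = 1, let ε ∈ {0,1}, and set c = 1 if m is odd and c = √-1 if m is even. Suppose (F_1,…,F_m) ∈ Y_m satisfies C(F_i ∩ F_{i-1}^⊥) = span(e) (as subspaces of ℂ²) for all 1 ≤ i ≤ m-1 and C(F_m ∩ F_{m-1}^⊥) = span(c·e + (-1)^ε f). Then F_i = span(e_1,…,e_i) for all 1 ≤ i ≤ m-1 and F_m = span(e_1,…,e_{m-1}, c·e_m + (-1)^ε f_1). In particular F_m ⊆ E_{n-1,1} and F_m is isotropic with respect to β_D^{n-1,1}, so (F_1,…,F_m) lies in the embedded Springer fiber Fl^{n-1,1}_D. -/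
noncomputable section
namespace Spr

open EuclideanSpace in
lemma eucl_sum_apply {n : ℕ} (s : Finset (Fin n)) (f : Fin n → EuclideanSpace ℂ (Fin n))
    (q : Fin n) : (∑ p ∈ s, f p) q = ∑ p ∈ s, f p q := by
  have h1 : ∀ x : EuclideanSpace ℂ (Fin n), x q
      = (inner ℂ (EuclideanSpace.single q (1:ℂ)) x : ℂ) := by
    intro x; rw [EuclideanSpace.inner_single_left]; simp
  rw [h1 (∑ p ∈ s, f p), inner_sum]
  exact Finset.sum_congr rfl fun p _ => (h1 _).symm

lemma eucl_eq_sum_single {n : ℕ} (v : EuclideanSpace ℂ (Fin n)) :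
    v = ∑ p : Fin n, v p • EuclideanSpace.single p (1:ℂ) := by
  ext q
  rw [eucl_sum_apply]
  simp [EuclideanSpace.single_apply]

lemma eVec_eq (N i : ℕ) (h1 : 1 ≤ i) (h2 : i ≤ N) :
    eVec N i = EuclideanSpace.single (⟨i-1, by omega⟩ : Fin (2*N)) 1 := by
  rw [eVec, dif_pos ⟨h1, h2⟩]

lemma fVec_eq (N i : ℕ) (h1 : 1 ≤ i) (h2 : i ≤ N) :
    fVec N i = EuclideanSpace.single (⟨N+i-1, by omega⟩ : Fin (2*N)) 1 := by
  rw [fVec, dif_pos ⟨h1, h2⟩]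

def Espan (N i : ℕ) : Submodule ℂ (Vsp N) := Submodule.span ℂ (eVec N '' Set.Icc 1 i)

def coordSub (N : ℕ) (s : Set ℕ) : Submodule ℂ (Vsp N) where
  carrier := {v | ∀ p : Fin (2*N), p.val ∉ s → v p = 0}
  add_mem' := by
    intro a b ha hb p hp
    have : (a + b) p = a p + b p := rfl
    rw [this, ha p hp, hb p hp, add_zero]
  zero_mem' := fun p hp => rfl
  smul_mem' := by
    intro c v hv p hp
    have : (c • v) p = c * v p := rfl
    rw [this, hv p hp, mul_zero]

lemma mem_coordSub {N : ℕ} {s : Set ℕ} {v : Vsp N} :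
    v ∈ coordSub N s ↔ ∀ p : Fin (2*N), p.val ∉ s → v p = 0 := Iff.rfl

lemma espan_eq_coord (N i : ℕ) (hi : i ≤ N) :
    Espan N i = coordSub N {t | t < i} := by
  apply le_antisymm
  · rw [Espan, Submodule.span_le]
    rintro x ⟨j, hj, rfl⟩
    rw [Set.mem_Icc] at hj
    intro p hp
    rw [eVec_eq N j hj.1 (hj.2.trans hi), EuclideanSpace.single_apply]
    have hne : p ≠ ⟨j-1, by omega⟩ := by
      intro h
      apply hp
      rw [h]
      simp only [Set.mem_setOf_eq]
      omega
    simp [hne]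
  · intro v hv
    rw [mem_coordSub] at hv
    rw [eucl_eq_sum_single v]
    apply Submodule.sum_mem
    intro p _
    by_cases hp : p.val < i
    · apply Submodule.smul_mem
      apply Submodule.subset_span
      refine ⟨p.val+1, Set.mem_Icc.2 ⟨by omega, by omega⟩, ?_⟩
      rw [eVec_eq _ _ (by omega) (by omega)]
      congr 1
    · rw [hv p (by simpa using hp)]
      simp
lemma zMap_apply (N : ℕ) (v : Vsp N) (j : Fin (2*N)) :
    zMap N v j = if h : j.val + 1 < 2*N ∧ j.val + 1 ≠ N then v ⟨j.val+1, h.1⟩ else 0 := rfl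

lemma coord_zero_of_z {N i : ℕ} (hi : i ≤ N) {H : Submodule ℂ (Vsp N)}
    (hz : Submodule.map (zMap N) H ≤ Espan N i) {u : Vsp N} (hu : u ∈ H)
    (q : Fin (2*N)) (hq1 : i < q.val) (hq2 : q.val ≠ N) : u q = 0 := by
  have hmem : zMap N u ∈ coordSub N {t | t < i} := by
    rw [← espan_eq_coord N i hi]
    exact hz ⟨u, hu, rfl⟩
  have hq2N := q.isLt
  have h1 : (zMap N u) ⟨q.val - 1, by omega⟩ = 0 :=
    hmem ⟨q.val - 1, by omega⟩ (by simp only [Set.mem_setOf_eq]; omega)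
  rw [zMap_apply] at h1
  have hc : q.val - 1 + 1 < 2*N ∧ q.val - 1 + 1 ≠ N := by constructor <;> omega
  rw [dif_pos hc] at h1
  have he : (⟨q.val - 1 + 1, hc.1⟩ : Fin (2*N)) = q := Fin.ext (show q.val - 1 + 1 = q.val by omega)
  rwa [he] at h1

lemma orth_coord {N i : ℕ} (hi : i ≤ N) {u : Vsp N} (hu : u ∈ (Espan N i)ᗮ)
    (p : Fin (2*N)) (hp : p.val < i) : u p = 0 := by
  have hmem : eVec N (p.val+1) ∈ Espan N i :=
    Submodule.subset_span ⟨p.val+1, Set.mem_Icc.2 ⟨by omega, by omega⟩, rfl⟩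
  have h := (Submodule.mem_orthogonal _ _).1 hu _ hmem
  rw [eVec_eq _ _ (by omega) (by omega), EuclideanSpace.inner_single_left] at h
  simpa using h

lemma f1_mem_orth {N i : ℕ} (hN : 1 ≤ N) (hi : i ≤ N) :
    fVec N 1 ∈ (Espan N i)ᗮ := by
  rw [Submodule.mem_orthogonal]
  intro u hu
  rw [espan_eq_coord N i hi] at hu
  have h0 : u ⟨N, by omega⟩ = 0 := hu ⟨N, by omega⟩ (by simp only [Set.mem_setOf_eq]; omega)
  rw [fVec_eq N 1 le_rfl hN, EuclideanSpace.inner_single_right]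
  have he : (⟨N+1-1, by omega⟩ : Fin (2*N)) = (⟨N, by omega⟩ : Fin (2*N)) := Fin.ext (show N+1-1 = N by omega)
  rw [he, h0]
  simp

lemma eStd_apply (j : Fin 2) : eStd j = if j = 0 then 1 else 0 := by
  rw [eStd, EuclideanSpace.single_apply]

lemma fStd_apply (j : Fin 2) : fStd j = if j = 1 then 1 else 0 := by
  rw [fStd, EuclideanSpace.single_apply]

lemma comb_apply (a b : ℂ) (j : Fin 2) :
    (a • eStd + b • fStd) j = a * eStd j + b * fStd j := rfl

lemma fStd_not_mem {a b : ℂ} (ha : a ≠ 0) :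
    fStd ∉ Submodule.span ℂ {a • eStd + b • fStd} := by
  rw [Submodule.mem_span_singleton]
  rintro ⟨s, hs⟩
  have h0 : (s • (a • eStd + b • fStd)) (0 : Fin 2) = fStd (0 : Fin 2) := by rw [hs]
  have h1 : (s • (a • eStd + b • fStd)) (1 : Fin 2) = fStd (1 : Fin 2) := by rw [hs]
  have hsm : ∀ j, (s • (a • eStd + b • fStd)) j = s * (a * eStd j + b * fStd j) := fun _ => rfl
  rw [hsm] at h0 h1
  rw [eStd_apply, fStd_apply] at h0 h1
  simp only [if_pos rfl] at h0 h1
  norm_num at h0 h1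
  rcases h0 with rfl | rfl
  · simp at h1
  · exact ha rfl

lemma cIdx_val (N : ℕ) (j : Fin 2) (t : Fin N) :
    (cIdx N j t).val = if j.val = 0 then t.val else N + t.val := rfl

lemma Cmap_supported (N iN : ℕ) (hi : iN < N) (v : Vsp N)
    (hs : ∀ q : Fin (2*N), q.val ≠ iN → q.val ≠ N → v q = 0) :
    Cmap N v = v ⟨iN, by omega⟩ • eStd + v ⟨N, by omega⟩ • fStd := by
  ext j
  have hj : Cmap N v j = ∑ t : Fin N, v (cIdx N j t) := rfl
  rw [hj, comb_apply, eStd_apply, fStd_apply]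
  rcases j with ⟨jv, hjv⟩
  interval_cases jv
  · have e1 : ((⟨0, hjv⟩ : Fin 2) = 0) := rfl
    have e2 : ¬((⟨0, hjv⟩ : Fin 2) = 1) := by simp [Fin.ext_iff]
    rw [if_pos e1, if_neg e2, mul_one, mul_zero, add_zero]
    have hv0 : ∀ t : Fin N, (cIdx N ⟨0, hjv⟩ t).val = t.val := fun t => rfl
    rw [Finset.sum_eq_single (⟨iN, hi⟩ : Fin N)]
    · exact congrArg v (Fin.ext (hv0 ⟨iN, hi⟩))
    · intro t _ ht
      apply hs
      · rw [hv0 t]; exact fun h => ht (Fin.ext h)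
      · rw [hv0 t]; have := t.isLt; omega
    · intro h
      exact absurd (Finset.mem_univ _) h
  · have e1 : ¬((⟨1, hjv⟩ : Fin 2) = 0) := by simp [Fin.ext_iff]
    have e2 : ((⟨1, hjv⟩ : Fin 2) = 1) := rfl
    rw [if_neg e1, if_pos e2, mul_one, mul_zero, zero_add]
    have hv1 : ∀ t : Fin N, (cIdx N ⟨1, hjv⟩ t).val = N + t.val := fun t => rfl
    rw [Finset.sum_eq_single (⟨0, by omega⟩ : Fin N)]
    · refine congrArg v (Fin.ext ?_)
      rw [hv1]
      show N + (0:ℕ) = N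
      omega
    · intro t _ ht
      apply hs
      · rw [hv1 t]; omega
      · rw [hv1 t]
        intro h
        refine ht (Fin.ext ?_)
        show t.val = (0:ℕ)
        omega
    · intro h
      exact absurd (Finset.mem_univ _) h
lemma step_lemma (N m : ℕ) (hN : m < N) (i : ℕ) (hi : i + 1 ≤ m)
    (H : Submodule ℂ (Vsp N)) (hGH : Espan N i ≤ H)
    (hz : Submodule.map (zMap N) H ≤ Espan N i)
    (α β : ℂ) (hα : α ≠ 0)
    (hC : Submodule.map (Cmap N) (H ⊓ (Espan N i)ᗮ)
        = Submodule.span ℂ {α • eStd + β • fStd}) :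
    H = Espan N i ⊔ Submodule.span ℂ {α • eVec N (i+1) + β • fVec N 1} := by
  have hiN : i < N := by omega
  have h2N : N < 2*N := by omega
  set ii : Fin (2*N) := ⟨i, by omega⟩ with hii
  set nn : Fin (2*N) := ⟨N, by omega⟩ with hnn
  have sapp : ∀ (p q : Fin (2*N)), (EuclideanSpace.single p (1:ℂ)) q = if q = p then 1 else 0 :=
    fun p q => EuclideanSpace.single_apply p 1 q
  have heV : eVec N (i+1) = EuclideanSpace.single ii 1 := by
    rw [eVec_eq N (i+1) (by omega) (by omega)]
    exact congrArg (fun t => EuclideanSpace.single t (1:ℂ)) (Fin.ext (show i+1-1 = i by omega))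
  have hfV : fVec N 1 = EuclideanSpace.single nn 1 := by
    rw [fVec_eq N 1 le_rfl (by omega)]
    exact congrArg (fun t => EuclideanSpace.single t (1:ℂ)) (Fin.ext (show N+1-1 = N by omega))
  have hvne : ii ≠ nn := by
    intro h
    have : i = N := congrArg Fin.val h
    omega
  set u0 : Vsp N := α • eVec N (i+1) + β • fVec N 1 with hu0def
  -- u0 lies in H
  have hw : α • eStd + β • fStd ∈ Submodule.map (Cmap N) (H ⊓ (Espan N i)ᗮ) := by
    rw [hC]; exact Submodule.mem_span_singleton_self _
  obtain ⟨v, hv, hCv⟩ := hw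
  have hvH : v ∈ H := hv.1
  have hvO : v ∈ (Espan N i)ᗮ := hv.2
  have hsupp : ∀ q : Fin (2*N), q.val ≠ i → q.val ≠ N → v q = 0 := by
    intro q h1 h2
    by_cases h3 : q.val < i
    · exact orth_coord (by omega) hvO q h3
    · exact coord_zero_of_z (by omega) hz hvH q (by omega) h2
  have hCv' : v ii • eStd + v nn • fStd = α • eStd + β • fStd := by
    rw [← Cmap_supported N i hiN v hsupp, hCv]
  have hvi : v ii = α := by
    have h0 : (v ii • eStd + v nn • fStd) (0 : Fin 2) = (α • eStd + β • fStd) (0 : Fin 2) := by rw [hCv']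
    rw [comb_apply, comb_apply, eStd_apply, fStd_apply] at h0
    simpa using h0
  have hvN : v nn = β := by
    have h0 : (v ii • eStd + v nn • fStd) (1 : Fin 2) = (α • eStd + β • fStd) (1 : Fin 2) := by rw [hCv']
    rw [comb_apply, comb_apply, eStd_apply, fStd_apply] at h0
    simpa using h0
  have hveq : v = u0 := by
    rw [hu0def, heV, hfV]
    ext q
    have hrhs : ((α • EuclideanSpace.single ii (1:ℂ) + β • EuclideanSpace.single nn 1 : Vsp N)) q
        = α * (EuclideanSpace.single ii (1:ℂ)) q + β * (EuclideanSpace.single nn (1:ℂ)) q := rfl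
    rw [hrhs, sapp, sapp]
    by_cases h1 : q = ii
    · subst h1; rw [if_pos rfl, if_neg hvne, hvi]; ring
    · by_cases h2 : q = nn
      · subst h2; rw [if_neg h1, if_pos rfl, hvN]; ring
      · rw [if_neg h1, if_neg h2]
        rw [hsupp q (fun h => h1 (Fin.ext h)) (fun h => h2 (Fin.ext h))]
        ring
  have hu0H : u0 ∈ H := hveq ▸ hvH
  apply le_antisymm
  · -- the hard direction
    intro u huH
    have husupp : ∀ q : Fin (2*N), i < q.val → q.val ≠ N → u q = 0 :=
      fun q h1 h2 => coord_zero_of_z (by omega) hz huH q h1 h2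
    set S : Vsp N := ∑ p : Fin (2*N), (if p.val < i then u p else 0) • EuclideanSpace.single p 1 with hS
    have hSmem : S ∈ Espan N i := by
      apply Submodule.sum_mem
      intro p _
      by_cases hp : p.val < i
      · rw [if_pos hp]
        apply Submodule.smul_mem
        apply Submodule.subset_span
        refine ⟨p.val+1, Set.mem_Icc.2 ⟨by omega, by omega⟩, ?_⟩
        rw [eVec_eq _ _ (by omega) (by omega)]
        congr 1
      · rw [if_neg hp, zero_smul]
        exact Submodule.zero_mem _
    have hSapp : ∀ q : Fin (2*N), S q = if q.val < i then u q else 0 := by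
      intro q
      rw [hS, eucl_sum_apply]
      rw [Finset.sum_eq_single q]
      · have h1 : (EuclideanSpace.single q (1:ℂ)) q = 1 := by
          rw [EuclideanSpace.single_apply, if_pos rfl]
        have hsm : ((if q.val < i then u q else 0) • EuclideanSpace.single q (1:ℂ)) q
            = (if q.val < i then u q else 0) * (EuclideanSpace.single q (1:ℂ)) q := rfl
        rw [hsm, h1, mul_one]
      · intro p _ hp
        have hsm : ((if p.val < i then u p else 0) • EuclideanSpace.single p (1:ℂ)) q
            = (if p.val < i then u p else 0) * (EuclideanSpace.single p (1:ℂ)) q := rfl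
        rw [hsm, sapp, if_neg (show ¬ q = p from fun h => hp h.symm), mul_zero]
      · intro h
        exact absurd (Finset.mem_univ _) h
    set t : ℂ := u nn - u ii / α * β with htdef
    have hweq : u - S - (u ii / α) • u0 = t • EuclideanSpace.single nn 1 := by
      ext q
      have hlhs : (u - S - (u ii / α) • u0) q = u q - S q - (u ii / α) * u0 q := rfl
      have hu0q : u0 q = α * (EuclideanSpace.single ii (1:ℂ)) q
          + β * (EuclideanSpace.single nn (1:ℂ)) q := by rw [hu0def, heV, hfV]; rfl
      have hrhs : ((t • EuclideanSpace.single nn 1 : Vsp N)) q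
          = t * (EuclideanSpace.single nn (1:ℂ)) q := rfl
      rw [hlhs, hrhs, hu0q, hSapp q, sapp, sapp]
      by_cases h1 : q = ii
      · subst h1
        rw [if_pos rfl, if_neg hvne, if_neg (show ¬ ((i:ℕ) < i) by omega)]
        field_simp
        ring
      · by_cases h2 : q = nn
        · subst h2
          rw [if_neg h1, if_pos rfl, if_neg (show ¬ ((N:ℕ) < i) by omega), htdef]
          ring
        · rw [if_neg h1, if_neg h2]
          by_cases h3 : q.val < i
          · rw [if_pos h3]; ring
          · rw [if_neg h3]
            have hqi : q.val ≠ i := fun h => h1 (Fin.ext h)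
            have hqN : q.val ≠ N := fun h => h2 (Fin.ext h)
            rw [husupp q (by omega) hqN]
            ring
    by_cases ht : t = 0
    · rw [ht, zero_smul, sub_sub, sub_eq_zero] at hweq
      rw [hweq]
      exact Submodule.add_mem _ (Submodule.mem_sup_left hSmem)
        (Submodule.mem_sup_right
          (Submodule.smul_mem _ _ (Submodule.mem_span_singleton_self _)))
    · exfalso
      have hmemH : t • EuclideanSpace.single nn (1:ℂ) ∈ H := by
        rw [← hweq]
        exact Submodule.sub_mem _ (Submodule.sub_mem _ huH (hGH hSmem))
          (Submodule.smul_mem _ _ hu0H)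
      have hf1H : EuclideanSpace.single nn (1:ℂ) ∈ H := by
        have := Submodule.smul_mem H t⁻¹ hmemH
        rwa [smul_smul, inv_mul_cancel₀ ht, one_smul] at this
      have hf1O : EuclideanSpace.single nn (1:ℂ) ∈ (Espan N i)ᗮ := by
        rw [← hfV]
        exact f1_mem_orth (by omega) (by omega)
      have hmem2 : Cmap N (EuclideanSpace.single nn (1:ℂ))
          ∈ Submodule.span ℂ {α • eStd + β • fStd} := by
        rw [← hC]
        exact Submodule.mem_map_of_mem ⟨hf1H, hf1O⟩
      have hCf1 : Cmap N (EuclideanSpace.single nn (1:ℂ)) = fStd := by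
        rw [Cmap_supported N i hiN _
          (fun q h1 h2 => by rw [EuclideanSpace.single_apply,
            if_neg (fun h => h2 (congrArg Fin.val h))])]
        rw [EuclideanSpace.single_apply, EuclideanSpace.single_apply,
          if_neg hvne, if_pos rfl, zero_smul, one_smul, zero_add]
      rw [hCf1] at hmem2
      exact fStd_not_mem hα hmem2
  · apply sup_le hGH
    rw [Submodule.span_le, Set.singleton_subset_iff]
    exact hu0H
lemma espan_zero (N : ℕ) : Espan N 0 = ⊥ := by
  rw [Espan]
  have : Set.Icc 1 0 = (∅ : Set ℕ) := Set.Icc_eq_empty (by omega)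
  rw [this, Set.image_empty, Submodule.span_empty]

lemma espan_succ (N i : ℕ) :
    Espan N (i+1) = Espan N i ⊔ Submodule.span ℂ {eVec N (i+1)} := by
  have hset : Set.Icc 1 (i+1) = Set.Icc 1 i ∪ {i+1} := by
    ext t
    simp only [Set.mem_Icc, Set.mem_union, Set.mem_singleton_iff]
    omega
  rw [Espan, Espan, hset, Set.image_union, Submodule.span_union, Set.image_singleton]

lemma bFormFun_add_right {N : ℕ} (c : Fin (2*N) → Fin (2*N) → ℂ) (v w w' : Vsp N) :
    bFormFun N c v (w + w') = bFormFun N c v w + bFormFun N c v w' := by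
  simp [bFormFun, PiLp.add_apply, mul_add, Finset.sum_add_distrib]

lemma bFormFun_smul_right {N : ℕ} (c : Fin (2*N) → Fin (2*N) → ℂ) (s : ℂ) (v w : Vsp N) :
    bFormFun N c v (s • w) = s * bFormFun N c v w := by
  simp only [bFormFun, PiLp.smul_apply, smul_eq_mul, Finset.mul_sum]
  refine Finset.sum_congr rfl fun p _ => Finset.sum_congr rfl fun q _ => by ring

lemma bFormFun_zero_right {N : ℕ} (c : Fin (2*N) → Fin (2*N) → ℂ) (v : Vsp N) :
    bFormFun N c v 0 = 0 := by
  rw [bFormFun]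
  apply Finset.sum_eq_zero
  intro p _
  apply Finset.sum_eq_zero
  intro q _
  have h0 : (0 : Vsp N) q = 0 := rfl
  rw [h0, mul_zero, mul_zero]

lemma isotropic_of_gen {N : ℕ} (c : Fin (2*N) → Fin (2*N) → ℂ) (S : Set (Vsp N))
    (h : ∀ x ∈ S, ∀ y ∈ S, bFormFun N c x y = 0) :
    IsIsotropic (bFormFun N c) (Submodule.span ℂ S) := by
  have hright : ∀ x ∈ S, ∀ w ∈ Submodule.span ℂ S, bFormFun N c x w = 0 := by
    intro x hx w hw
    induction hw using Submodule.span_induction with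
    | mem y hy => exact h x hx y hy
    | zero => exact bFormFun_zero_right c x
    | add y z _ _ hy hz => rw [bFormFun_add_right, hy, hz, add_zero]
    | smul s y _ hy => rw [bFormFun_smul_right, hy, mul_zero]
  intro v hv w hw
  induction hv using Submodule.span_induction with
  | mem y hy => exact hright y hy w hw
  | zero => exact bFormFun_zero_left c w
  | add y z _ _ hy hz => rw [bFormFun_add_left, hy, hz, add_zero]
  | smul s y _ hy => rw [bFormFun_smul_left, hy, mul_zero]

lemma bFormFun_single_single {N : ℕ} (c : Fin (2*N) → Fin (2*N) → ℂ) (p q : Fin (2*N)) :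
    bFormFun N c (EuclideanSpace.single p 1) (EuclideanSpace.single q 1) = c p q := by
  rw [bFormFun]
  rw [Finset.sum_eq_single p]
  · rw [Finset.sum_eq_single q]
    · rw [EuclideanSpace.single_apply, EuclideanSpace.single_apply, if_pos rfl, if_pos rfl]
      ring
    · intro b _ hb
      rw [EuclideanSpace.single_apply (i := q), if_neg hb, mul_zero, mul_zero]
    · intro hq
      exact absurd (Finset.mem_univ _) hq
  · intro b _ hb
    rw [EuclideanSpace.single_apply (i := p), if_neg hb]
    simp only [zero_mul, Finset.sum_const_zero]
  · intro hp
    exact absurd (Finset.mem_univ _) hp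

lemma cD_low {N m : ℕ} (hm : 2 ≤ m) (p q : Fin (2*N)) (hp : p.val < N) (hq : q.val < N)
    (hne : p.val + q.val + 2 ≠ 2*m) : cD N m 1 p q = 0 := by
  rw [cD, if_neg (by omega), if_pos ⟨hp, hq⟩, if_neg (by omega)]

lemma cD_mm {N m : ℕ} (hm : 2 ≤ m) (p q : Fin (2*N)) (hpN : p.val < N) (hqN : q.val < N)
    (hp : p.val = m-1) (hq : q.val = m-1) : cD N m 1 p q = (-1:ℂ)^(m-1) := by
  rw [cD, if_neg (by omega), if_pos ⟨hpN, hqN⟩, if_pos (by omega), hp]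

lemma cD_mixed {N m : ℕ} (hm : 2 ≤ m) (p q : Fin (2*N))
    (h : (p.val < N ∧ ¬ q.val < N) ∨ (¬ p.val < N ∧ q.val < N)) : cD N m 1 p q = 0 := by
  rw [cD, if_neg (by omega)]
  rcases h with ⟨h1, h2⟩ | ⟨h1, h2⟩
  · rw [if_neg (by omega), if_neg (by omega)]
  · rw [if_neg (by omega), if_neg (by omega)]

lemma cD_NN {N m : ℕ} (hm : 2 ≤ m) (p q : Fin (2*N)) (hp : p.val = N) (hq : q.val = N) :
    cD N m 1 p q = -1 := by
  rw [cD, if_neg (by omega), if_neg (by omega), if_pos (by omega), if_pos (by omega), hp]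
  norm_num

/-- Explicit description of the flags in the `(n-1,1)` Springer fiber of
type `D` corresponding to a cup diagram consisting only of rays. -/
theorem statement13 (m N : ℕ) (hm : 2 ≤ m) (hN : m < N) (eps : ℕ) (heps : eps = 0 ∨ eps = 1)
    (F : Fin (m+1) → Submodule ℂ (Vsp N)) (hF : InY N (m+1) F)
    (hC1 : ∀ i : Fin m, i.val + 1 < m →
      Submodule.map (Cmap N) (F i.succ ⊓ (F i.castSucc)ᗮ) = Submodule.span ℂ {eStd})
    (hC2 : ∀ i : Fin m, i.val + 1 = m →
      Submodule.map (Cmap N) (F i.succ ⊓ (F i.castSucc)ᗮ)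
        = Submodule.span ℂ
            {(if Odd m then (1:ℂ) else Complex.I) • eStd + ((-1:ℂ)^eps) • fStd}) :
    (∀ i : Fin (m+1), 1 ≤ i.val → i.val ≤ m - 1 →
        F i = Submodule.span ℂ (eVec N '' Set.Icc 1 i.val)) ∧
    F (Fin.last m) = Submodule.span ℂ
      ((eVec N '' Set.Icc 1 (m-1)) ∪
        {(if Odd m then (1:ℂ) else Complex.I) • eVec N m + ((-1:ℂ)^eps) • fVec N 1}) ∧
    InFlD N m 1 F := by
  have h0 := hF.1
  have hstep := hF.2
  have hαne : (if Odd m then (1:ℂ) else Complex.I) ≠ 0 := by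
    split_ifs
    · exact one_ne_zero
    · exact Complex.I_ne_zero
  -- main induction
  have keyAux : ∀ n : ℕ, n ≤ m - 1 → ∀ i : Fin (m+1), i.val = n → F i = Espan N n := by
    intro n
    induction n with
    | zero =>
      intro _ i hi
      rw [h0 i hi, espan_zero]
    | succ n ih =>
      intro h i hval
      have hn1 : n < m + 1 := by omega
      obtain ⟨_, hle, hz⟩ := hstep ⟨n, hn1⟩ i (show i.val = n + 1 from hval)
      have hFi' : F ⟨n, hn1⟩ = Espan N n := ih (by omega) ⟨n, hn1⟩ rfl
      rw [hFi'] at hle hz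
      have hnm : n < m := by omega
      have hCi := hC1 ⟨n, hnm⟩ (show n + 1 < m by omega)
      have hsucc : (⟨n, hnm⟩ : Fin m).succ = i := Fin.ext (show n + 1 = i.val from hval.symm)
      have hcast : (⟨n, hnm⟩ : Fin m).castSucc = (⟨n, hn1⟩ : Fin (m+1)) := Fin.ext rfl
      rw [hsucc, hcast, hFi'] at hCi
      have hst := step_lemma N m hN n (by omega) (F i) hle hz 1 0 one_ne_zero
        (by rw [hCi, one_smul, zero_smul, add_zero])
      exact hst.trans (by rw [one_smul, zero_smul, add_zero, ← espan_succ])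
  -- the last subspace
  have hmN1 : m - 1 < m + 1 := by omega
  obtain ⟨_, hle, hz⟩ := hstep ⟨m-1, hmN1⟩ (Fin.last m)
    (show (Fin.last m).val = (m-1) + 1 from (by omega : m = m - 1 + 1))
  have hFm1 : F ⟨m-1, hmN1⟩ = Espan N (m-1) := keyAux (m-1) le_rfl ⟨m-1, hmN1⟩ rfl
  rw [hFm1] at hle hz
  have hmm : m - 1 < m := by omega
  have hCl := hC2 ⟨m-1, hmm⟩ (show (m-1) + 1 = m by omega)
  have hsucc : (⟨m-1, hmm⟩ : Fin m).succ = Fin.last m :=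
    Fin.ext (show (m-1) + 1 = m by omega)
  have hcast : (⟨m-1, hmm⟩ : Fin m).castSucc = (⟨m-1, hmN1⟩ : Fin (m+1)) := Fin.ext rfl
  rw [hsucc, hcast, hFm1] at hCl
  have hres := step_lemma N m hN (m-1) (by omega) (F (Fin.last m)) hle hz
    (if Odd m then (1:ℂ) else Complex.I) ((-1:ℂ)^eps) hαne hCl
  rw [show m - 1 + 1 = m by omega] at hres
  have hFm : F (Fin.last m) = Submodule.span ℂ
      ((eVec N '' Set.Icc 1 (m-1)) ∪
        {(if Odd m then (1:ℂ) else Complex.I) • eVec N m + ((-1:ℂ)^eps) • fVec N 1}) := by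
    rw [Submodule.span_union]
    exact hres
  refine ⟨?_, hFm, hF, ?_, ?_⟩
  · intro i _ h2
    exact keyAux i.val h2 i rfl
  · -- F_m ⊆ E_{2m-1,1}
    rw [hFm, Submodule.span_le]
    rintro x (⟨j, hj, rfl⟩ | rfl)
    · rw [Set.mem_Icc] at hj
      exact Submodule.subset_span (Or.inl ⟨j, Set.mem_Icc.2 ⟨hj.1, by omega⟩, rfl⟩)
    · refine Submodule.add_mem _ (Submodule.smul_mem _ _ ?_) (Submodule.smul_mem _ _ ?_)
      · exact Submodule.subset_span (Or.inl ⟨m, Set.mem_Icc.2 ⟨by omega, by omega⟩, rfl⟩)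
      · exact Submodule.subset_span (Or.inr ⟨1, Set.mem_Icc.2 ⟨le_rfl, le_rfl⟩, rfl⟩)
  · -- isotropy
    rw [hFm]
    apply isotropic_of_gen (cD N m 1)
    rintro x (⟨jx, hjx, rfl⟩ | rfl) y (⟨jy, hjy, rfl⟩ | rfl)
    · rw [Set.mem_Icc] at hjx hjy
      rw [eVec_eq N jx hjx.1 (by omega), eVec_eq N jy hjy.1 (by omega),
        bFormFun_single_single]
      exact cD_low hm _ _ (show jx - 1 < N by omega) (show jy - 1 < N by omega)
        (show jx - 1 + (jy - 1) + 2 ≠ 2*m by omega)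
    · rw [Set.mem_Icc] at hjx
      rw [eVec_eq N jx hjx.1 (by omega), eVec_eq N m (by omega) (by omega),
        fVec_eq N 1 (by omega) (by omega),
        bFormFun_add_right, bFormFun_smul_right, bFormFun_smul_right,
        bFormFun_single_single, bFormFun_single_single,
        cD_low hm _ _ (show jx - 1 < N by omega) (show m - 1 < N by omega)
          (show jx - 1 + (m - 1) + 2 ≠ 2*m by omega),
        cD_mixed hm _ _ (Or.inl ⟨show jx - 1 < N by omega, show ¬ (N + 1 - 1 < N) by omega⟩)]
      ring
    · rw [Set.mem_Icc] at hjy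
      rw [eVec_eq N jy hjy.1 (by omega), eVec_eq N m (by omega) (by omega),
        fVec_eq N 1 (by omega) (by omega),
        bFormFun_add_left, bFormFun_smul_left, bFormFun_smul_left,
        bFormFun_single_single, bFormFun_single_single,
        cD_low hm _ _ (show m - 1 < N by omega) (show jy - 1 < N by omega)
          (show m - 1 + (jy - 1) + 2 ≠ 2*m by omega),
        cD_mixed hm _ _ (Or.inr ⟨show ¬ (N + 1 - 1 < N) by omega, show jy - 1 < N by omega⟩)]
      ring
    · rw [eVec_eq N m (by omega) (by omega), fVec_eq N 1 (by omega) (by omega),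
        bFormFun_add_left, bFormFun_smul_left, bFormFun_smul_left,
        bFormFun_add_right, bFormFun_add_right,
        bFormFun_smul_right, bFormFun_smul_right, bFormFun_smul_right, bFormFun_smul_right,
        bFormFun_single_single, bFormFun_single_single, bFormFun_single_single,
        bFormFun_single_single,
        cD_mm hm _ _ (show m - 1 < N by omega) (show m - 1 < N by omega) rfl rfl,
        cD_mixed hm _ _ (Or.inl ⟨show m - 1 < N by omega, show ¬ (N + 1 - 1 < N) by omega⟩),
        cD_mixed hm _ _ (Or.inr ⟨show ¬ (N + 1 - 1 < N) by omega, show m - 1 < N by omega⟩),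
        cD_NN hm _ _ (show N + 1 - 1 = N by omega) (show N + 1 - 1 = N by omega)]
      by_cases hodd : Odd m
      · rw [if_pos hodd]
        have h1 : (-1:ℂ)^(m-1) = 1 := Even.neg_one_pow (Nat.Odd.sub_odd hodd odd_one)
        rcases heps with rfl | rfl <;>
          · rw [h1]
            norm_num
      · rw [if_neg hodd]
        have h1 : (-1:ℂ)^(m-1) = -1 :=
          Odd.neg_one_pow (Nat.Even.sub_odd (by omega) (Nat.not_odd_iff_even.mp hodd) odd_one)
        rcases heps with rfl | rfl <;>
          · rw [h1]
            linear_combination (-1 : ℂ) * Complex.I_sq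


end Spr
end
end
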